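/- (Laurent-series value decomposition, Lamond–Puterman.) Let P be an n×n real row-stochastic matrix, r ∈ ℝ^n a reward vector, P* the Cesàro limit of P^m, H = (I − P + P*)⁻¹ (I − P*) the Drazin inverse of I − P, and σ(H) the spectral radius of H. Then for every discount factor γ with σ(H)/(σ(H)+1) < γ < 1, the series ∑_{m=0}^∞ ((γ−1)/γ)^m H^{m+1} r converges and the discounted value function v = (I − γP)⁻¹ r satisfies v = (1/(1−γ)) P* r + (1/γ) ∑_{m=0}^∞ ((γ−1)/γ)^m H^{m+1} r. -/

import Mathlib

open Finset Filter Topology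

/-- A square real matrix is row-stochastic if all entries are nonnegative and
every row sums to 1. -/
def RowStochastic {n : ℕ} (P : Matrix (Fin n) (Fin n) ℝ) : Prop :=
  (∀ i j, 0 ≤ P i j) ∧ ∀ i, ∑ j, P i j = 1

/-- Spectral radius of a real square matrix (largest modulus of its complex
eigenvalues). -/
noncomputable def specRad {n : ℕ} (M : Matrix (Fin n) (Fin n) ℝ) : ℝ :=
  (spectralRadius ℂ (M.map (algebraMap ℝ ℂ))).toReal

namespace LaurentAux

open Matrix
open scoped ENNReal NNReal

variable {n : ℕ}

lemma rowStochastic_one : RowStochastic (1 : Matrix (Fin n) (Fin n) ℝ) := by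
  constructor
  · intro i j
    by_cases h : i = j <;> simp [Matrix.one_apply, h]
  · intro i
    simp [Matrix.one_apply]

lemma rowStochastic_mul {P Q : Matrix (Fin n) (Fin n) ℝ} (hP : RowStochastic P)
    (hQ : RowStochastic Q) : RowStochastic (P * Q) := by
  constructor
  · intro i j
    rw [Matrix.mul_apply]
    exact Finset.sum_nonneg fun k _ => mul_nonneg (hP.1 i k) (hQ.1 k j)
  · intro i
    simp_rw [Matrix.mul_apply]
    rw [Finset.sum_comm]
    simp_rw [← Finset.mul_sum, hQ.2, mul_one]
    exact hP.2 i

lemma rowStochastic_pow {P : Matrix (Fin n) (Fin n) ℝ} (hP : RowStochastic P) (k : ℕ) :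
    RowStochastic (P ^ k) := by
  induction k with
  | zero => simpa using rowStochastic_one
  | succ k ih => rw [pow_succ]; exact rowStochastic_mul ih hP

section Norms

attribute [local instance] Matrix.linftyOpNormedAddCommGroup Matrix.linftyOpNormedRing
  Matrix.linftyOpNormedAlgebra

lemma norm_le_one_of_rowStochastic {Q : Matrix (Fin n) (Fin n) ℝ} (hQ : RowStochastic Q) :
    ‖Q‖ ≤ 1 := by
  rw [Matrix.linfty_opNorm_def]
  rw [show (1:ℝ) = ((1:NNReal):ℝ) by simp, NNReal.coe_le_coe]
  refine Finset.sup_le fun i _ => le_of_eq ?_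
  apply NNReal.coe_injective
  push_cast
  calc ∑ j, ‖Q i j‖ = ∑ j, Q i j :=
        Finset.sum_congr rfl fun j _ => Real.norm_of_nonneg (hQ.1 i j)
    _ = 1 := hQ.2 i

/-- mulVec by a fixed vector, as a linear map in the matrix argument. -/
def mulVecL (v : Fin n → ℝ) : Matrix (Fin n) (Fin n) ℝ →ₗ[ℝ] (Fin n → ℝ) where
  toFun M := M *ᵥ v
  map_add' M N := Matrix.add_mulVec M N v
  map_smul' a M := Matrix.smul_mulVec a M v

@[simp] lemma mulVecL_apply (v : Fin n → ℝ) (M : Matrix (Fin n) (Fin n) ℝ) :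
    mulVecL v M = M *ᵥ v := rfl

lemma tendsto_mulVec {f : ℕ → Matrix (Fin n) (Fin n) ℝ} {L : Matrix (Fin n) (Fin n) ℝ}
    (h : Tendsto f atTop (𝓝 L)) (v : Fin n → ℝ) :
    Tendsto (fun m => f m *ᵥ v) atTop (𝓝 (L *ᵥ v)) := by
  have h1 : Tendsto (fun m => f m - L) atTop (𝓝 0) := by
    simpa using h.sub (tendsto_const_nhds (x := L))
  have h2 : Tendsto (fun m => ‖f m - L‖) atTop (𝓝 0) := by simpa using h1.norm
  have h3 : Tendsto (fun m => f m *ᵥ v - L *ᵥ v) atTop (𝓝 0) := by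
    refine squeeze_zero_norm (fun m => ?_) (by simpa using h2.mul_const ‖v‖)
    rw [← Matrix.sub_mulVec]
    exact Matrix.linfty_opNorm_mulVec _ _
  simpa using h3.add (tendsto_const_nhds (x := L *ᵥ v))

lemma err_tendsto {P : Matrix (Fin n) (Fin n) ℝ} (hP' : RowStochastic P) :
    Tendsto (fun m : ℕ => (m : ℝ)⁻¹ • (P ^ m - 1)) atTop
    (𝓝 (0 : Matrix (Fin n) (Fin n) ℝ)) := by
  have hb : ∀ m : ℕ, ‖(m : ℝ)⁻¹ • (P ^ m - 1)‖ ≤ (m : ℝ)⁻¹ * 2 := by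
    intro m
    rw [norm_smul, Real.norm_of_nonneg (by positivity : (0:ℝ) ≤ (m : ℝ)⁻¹)]
    have h2 : ‖P ^ m - 1‖ ≤ 2 := by
      calc ‖P ^ m - 1‖ ≤ ‖P ^ m‖ + ‖(1 : Matrix (Fin n) (Fin n) ℝ)‖ := norm_sub_le _ _
        _ ≤ 1 + 1 := add_le_add
            (norm_le_one_of_rowStochastic (rowStochastic_pow hP' m))
            (norm_le_one_of_rowStochastic (by simpa using rowStochastic_pow hP' 0))
        _ = 2 := by norm_num
    exact mul_le_mul_of_nonneg_left h2 (by positivity)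
  exact squeeze_zero_norm hb
    (by simpa using ((tendsto_inv_atTop_nhds_zero_nat (𝕜 := ℝ)).mul_const 2))

variable {P Pstar : Matrix (Fin n) (Fin n) ℝ} (hP : RowStochastic P)
  (hPstar : Tendsto (fun m : ℕ => (m : ℝ)⁻¹ • ∑ k ∈ Finset.range m, P ^ k)
      atTop (𝓝 Pstar))

include hP hPstar

lemma mul_cesaro : P * Pstar = Pstar := by
  set f : ℕ → Matrix (Fin n) (Fin n) ℝ := fun m => (m : ℝ)⁻¹ • ∑ k ∈ Finset.range m, P ^ k
  have key : ∀ m : ℕ, P * f m = f m + (m : ℝ)⁻¹ • (P ^ m - 1) := by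
    intro m
    have hs : ∑ k ∈ Finset.range m, P ^ (k + 1)
        = (∑ k ∈ Finset.range m, P ^ k) + (P ^ m - 1) := by
      have h1 := Finset.sum_range_succ (fun k => P ^ k) m
      have h2 := Finset.sum_range_succ' (fun k => P ^ k) m
      rw [h1] at h2
      simp only [pow_zero] at h2
      rw [eq_sub_iff_add_eq.mpr h2.symm]
      abel
    simp only [f, mul_smul_comm, Finset.mul_sum, ← pow_succ']
    rw [hs, smul_add]
  have h1 : Tendsto (fun m => P * f m) atTop (𝓝 (P * Pstar)) :=
    (tendsto_const_nhds.mul hPstar)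
  have h2 : Tendsto (fun m => P * f m) atTop (𝓝 Pstar) := by
    simp only [key]
    simpa using hPstar.add (err_tendsto hP)
  exact tendsto_nhds_unique h1 h2

lemma cesaro_mul : Pstar * P = Pstar := by
  set f : ℕ → Matrix (Fin n) (Fin n) ℝ := fun m => (m : ℝ)⁻¹ • ∑ k ∈ Finset.range m, P ^ k
  have key : ∀ m : ℕ, f m * P = f m + (m : ℝ)⁻¹ • (P ^ m - 1) := by
    intro m
    have hs : ∑ k ∈ Finset.range m, P ^ (k + 1)
        = (∑ k ∈ Finset.range m, P ^ k) + (P ^ m - 1) := by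
      have h1 := Finset.sum_range_succ (fun k => P ^ k) m
      have h2 := Finset.sum_range_succ' (fun k => P ^ k) m
      rw [h1] at h2
      simp only [pow_zero] at h2
      rw [eq_sub_iff_add_eq.mpr h2.symm]
      abel
    simp only [f, smul_mul_assoc, Finset.sum_mul, ← pow_succ]
    rw [hs, smul_add]
  have h1 : Tendsto (fun m => f m * P) atTop (𝓝 (Pstar * P)) :=
    (hPstar.mul tendsto_const_nhds)
  have h2 : Tendsto (fun m => f m * P) atTop (𝓝 Pstar) := by
    simp only [key]
    simpa using hPstar.add (err_tendsto hP)
  exact tendsto_nhds_unique h1 h2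

lemma pow_mul_cesaro : ∀ k : ℕ, P ^ k * Pstar = Pstar := by
  intro k
  induction k with
  | zero => simp
  | succ k ih => rw [pow_succ', mul_assoc, ih, mul_cesaro hP hPstar]

lemma cesaro_idem : Pstar * Pstar = Pstar := by
  set f : ℕ → Matrix (Fin n) (Fin n) ℝ := fun m => (m : ℝ)⁻¹ • ∑ k ∈ Finset.range m, P ^ k
  have key : ∀ m : ℕ, 1 ≤ m → f m * Pstar = Pstar := by
    intro m hm
    simp only [f, smul_mul_assoc, Finset.sum_mul]
    have : ∀ k ∈ Finset.range m, P ^ k * Pstar = Pstar := fun k _ => pow_mul_cesaro hP hPstar k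
    rw [Finset.sum_congr rfl this, Finset.sum_const, Finset.card_range,
      ← Nat.cast_smul_eq_nsmul ℝ, smul_smul,
      inv_mul_cancel₀ (by exact_mod_cast Nat.one_le_iff_ne_zero.mp hm), one_smul]
  have h1 : Tendsto (fun m => f m * Pstar) atTop (𝓝 (Pstar * Pstar)) :=
    (hPstar.mul tendsto_const_nhds)
  have heq : (fun _ : ℕ => Pstar) =ᶠ[atTop] fun m => f m * Pstar := by
    filter_upwards [eventually_ge_atTop 1] with m hm
    exact (key m hm).symm
  have h2 : Tendsto (fun m => f m * Pstar) atTop (𝓝 Pstar) :=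
    Tendsto.congr' heq tendsto_const_nhds
  exact tendsto_nhds_unique h1 h2

omit hP in
lemma detA_ne_zero (hPP : P * Pstar = Pstar) (hPPr : Pstar * P = Pstar)
    (hII : Pstar * Pstar = Pstar) : (1 - P + Pstar).det ≠ 0 := by
  intro hdet
  obtain ⟨v, hv0, hAv⟩ := (Matrix.exists_mulVec_eq_zero_iff).mpr hdet
  set A := 1 - P + Pstar with hA
  have hPsA : Pstar * A = Pstar := by
    rw [hA, mul_add, mul_sub, mul_one, hPPr, hII]
    abel
  have h1 : Pstar *ᵥ v = 0 := by
    calc Pstar *ᵥ v = (Pstar * A) *ᵥ v := by rw [hPsA]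
      _ = Pstar *ᵥ (A *ᵥ v) := (Matrix.mulVec_mulVec _ _ _).symm
      _ = 0 := by rw [hAv, Matrix.mulVec_zero]
  have h2 : P *ᵥ v = v := by
    have : A *ᵥ v = v - P *ᵥ v + Pstar *ᵥ v := by
      rw [hA, Matrix.add_mulVec, Matrix.sub_mulVec, Matrix.one_mulVec]
    rw [hAv, h1, add_zero] at this
    exact (sub_eq_zero.mp this.symm).symm
  have h3 : ∀ k : ℕ, (P ^ k) *ᵥ v = v := by
    intro k
    induction k with
    | zero => simp
    | succ k ih => rw [pow_succ', ← Matrix.mulVec_mulVec, ih, h2]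
  have h4 : ∀ m : ℕ, 1 ≤ m → ((m : ℝ)⁻¹ • ∑ k ∈ Finset.range m, P ^ k) *ᵥ v = v := by
    intro m hm
    rw [Matrix.smul_mulVec]
    have hsum : (∑ k ∈ Finset.range m, P ^ k) *ᵥ v = (m : ℝ) • v := by
      have : (∑ k ∈ Finset.range m, P ^ k) *ᵥ v = ∑ k ∈ Finset.range m, (P ^ k) *ᵥ v :=
        map_sum (mulVecL v) (fun k => P ^ k) (Finset.range m)
      rw [this, Finset.sum_congr rfl fun k _ => h3 k, Finset.sum_const, Finset.card_range,
        ← Nat.cast_smul_eq_nsmul ℝ]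
    rw [hsum, smul_smul, inv_mul_cancel₀ (by exact_mod_cast Nat.one_le_iff_ne_zero.mp hm),
      one_smul]
  have h5 : Tendsto (fun m : ℕ => ((m : ℝ)⁻¹ • ∑ k ∈ Finset.range m, P ^ k) *ᵥ v) atTop
      (𝓝 (Pstar *ᵥ v)) := tendsto_mulVec hPstar v
  have heq : (fun _ : ℕ => v) =ᶠ[atTop]
      fun m : ℕ => ((m : ℝ)⁻¹ • ∑ k ∈ Finset.range m, P ^ k) *ᵥ v := by
    filter_upwards [eventually_ge_atTop 1] with m hm
    exact (h4 m hm).symm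
  have h6 : Tendsto (fun m : ℕ => ((m : ℝ)⁻¹ • ∑ k ∈ Finset.range m, P ^ k) *ᵥ v) atTop
      (𝓝 v) := Tendsto.congr' heq tendsto_const_nhds
  exact hv0 (by rw [tendsto_nhds_unique h6 h5, h1])

omit hP hPstar

lemma summable_geom [Nonempty (Fin n)] (H : Matrix (Fin n) (Fin n) ℝ) (β : ℝ) (hβ : 0 < |β|)
    (hβσ : |β| * specRad H < 1) :
    Summable (fun m : ℕ => β ^ m • H ^ (m + 1)) := by
  classical
  set Hc : Matrix (Fin n) (Fin n) ℂ := H.map (algebraMap ℝ ℂ) with hHc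
  have hmap : ∀ m : ℕ, (H ^ m).map (algebraMap ℝ ℂ) = Hc ^ m := fun m => by
    simpa [hHc, RingHom.mapMatrix_apply] using (map_pow ((algebraMap ℝ ℂ).mapMatrix) H m)
  have hnorm : ∀ M : Matrix (Fin n) (Fin n) ℝ, ‖M.map (algebraMap ℝ ℂ)‖₊ = ‖M‖₊ := fun M => by
    simp [Matrix.linfty_opNNNorm_def]
  set σ : ℝ := specRad H with hσ
  have hσ'ne : spectralRadius ℂ Hc ≠ ⊤ :=
    ne_top_of_le_ne_top ENNReal.coe_ne_top (spectrum.spectralRadius_le_nnnorm (𝕜 := ℂ) Hc)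
  have hσnn : 0 ≤ σ := ENNReal.toReal_nonneg
  have hσinv : σ < |β|⁻¹ := by
    calc σ = |β|⁻¹ * (|β| * σ) := by field_simp
      _ < |β|⁻¹ * 1 := mul_lt_mul_of_pos_left hβσ (inv_pos.mpr hβ)
      _ = |β|⁻¹ := mul_one _
  set ρ : ℝ := (σ + |β|⁻¹) / 2 with hρ
  have hσρ : σ < ρ := by rw [hρ]; linarith
  have hρpos : 0 < ρ := by rw [hρ]; have := inv_pos.mpr hβ; linarith
  have hβρ : |β| * ρ < 1 := by
    have hρinv : ρ < |β|⁻¹ := by rw [hρ]; linarith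
    calc |β| * ρ < |β| * |β|⁻¹ := mul_lt_mul_of_pos_left hρinv hβ
      _ = 1 := mul_inv_cancel₀ hβ.ne'
  clear_value ρ
  have hgelf := spectrum.pow_nnnorm_pow_one_div_tendsto_nhds_spectralRadius Hc
  have hσ'lt : spectralRadius ℂ Hc < ENNReal.ofReal ρ := by
    rw [← ENNReal.ofReal_toReal hσ'ne]
    exact (ENNReal.ofReal_lt_ofReal_iff hρpos).mpr hσρ
  have hev : ∀ᶠ m : ℕ in atTop, (‖Hc ^ m‖₊ : ℝ≥0∞) ^ (1 / (m : ℝ)) < ENNReal.ofReal ρ :=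
    hgelf.eventually_lt_const hσ'lt
  have hbound : ∀ᶠ m : ℕ in atTop, ‖H ^ m‖ ≤ ρ ^ m := by
    filter_upwards [hev, eventually_ge_atTop 1] with m hm hm1
    have hmne : (m : ℝ) ≠ 0 := by exact_mod_cast Nat.one_le_iff_ne_zero.mp hm1
    have h1 : ((‖Hc ^ m‖₊ : ℝ≥0∞) ^ (1 / (m : ℝ))) ^ (m : ℝ)
        ≤ (ENNReal.ofReal ρ) ^ (m : ℝ) :=
      ENNReal.rpow_le_rpow hm.le (by positivity)
    rw [← ENNReal.rpow_mul, one_div, inv_mul_cancel₀ hmne, ENNReal.rpow_one] at h1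
    rw [ENNReal.ofReal_rpow_of_pos hρpos, Real.rpow_natCast] at h1
    have h2 : ‖Hc ^ m‖ ≤ ρ ^ m := by
      have := ENNReal.toReal_mono (by simp) h1
      simpa [ENNReal.toReal_ofReal (by positivity : (0:ℝ) ≤ ρ ^ m)] using this
    calc ‖H ^ m‖ = ‖Hc ^ m‖ := by
          rw [← hmap m, ← coe_nnnorm, ← coe_nnnorm, hnorm]
      _ ≤ ρ ^ m := h2
  apply Summable.of_norm_bounded_eventually (g := fun m => ρ * (|β| * ρ) ^ m)
    ((summable_geometric_of_lt_one (by positivity) hβρ).mul_left ρ)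
  rw [Nat.cofinite_eq_atTop]
  filter_upwards [(tendsto_add_atTop_nat 1).eventually hbound] with m hm
  calc ‖β ^ m • H ^ (m + 1)‖ = |β| ^ m * ‖H ^ (m + 1)‖ := by
        rw [norm_smul, Real.norm_eq_abs, abs_pow]
    _ ≤ |β| ^ m * ρ ^ (m + 1) := mul_le_mul_of_nonneg_left hm (by positivity)
    _ = ρ * (|β| * ρ) ^ m := by ring

/-- Main workhorse lemma, for `n ≥ 1`. -/
lemma core [Nonempty (Fin n)] (hP : RowStochastic P)
    (hPstar : Tendsto (fun m : ℕ => (m : ℝ)⁻¹ • ∑ k ∈ Finset.range m, P ^ k)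
      atTop (𝓝 Pstar))
    (r : Fin n → ℝ)
    (H : Matrix (Fin n) (Fin n) ℝ)
    (hH : H = (1 - P + Pstar)⁻¹ * (1 - Pstar))
    (γ : ℝ) (hγlo : specRad H / (specRad H + 1) < γ) (hγhi : γ < 1) :
    ∃ s : Fin n → ℝ,
      Tendsto (fun M : ℕ => ∑ m ∈ Finset.range M, ((γ - 1) / γ) ^ m • (H ^ (m + 1)).mulVec r)
        atTop (𝓝 s) ∧
      (1 - γ • P)⁻¹.mulVec r = (1 - γ)⁻¹ • Pstar.mulVec r + γ⁻¹ • s := by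
  have hPP := mul_cesaro hP hPstar
  have hPPr := cesaro_mul hP hPstar
  have hII := cesaro_idem hP hPstar
  set A := 1 - P + Pstar with hA
  have hdet : A.det ≠ 0 := detA_ne_zero hPstar hPP hPPr hII
  have hU : IsUnit A.det := isUnit_iff_ne_zero.mpr hdet
  have hA1 : A * A⁻¹ = 1 := Matrix.mul_nonsing_inv A hU
  have hA2 : A⁻¹ * A = 1 := Matrix.nonsing_inv_mul A hU
  have hAPs : A * Pstar = Pstar := by
    rw [hA, add_mul, sub_mul, one_mul, hPP, hII]
    abel
  have hPsA : Pstar * A = Pstar := by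
    rw [hA, mul_add, mul_sub, mul_one, hPPr, hII]
    abel
  have hAiPs : A⁻¹ * Pstar = Pstar := by
    calc A⁻¹ * Pstar = A⁻¹ * (A * Pstar) := by rw [hAPs]
      _ = (A⁻¹ * A) * Pstar := by rw [mul_assoc]
      _ = Pstar := by rw [hA2, one_mul]
  have hPsAi : Pstar * A⁻¹ = Pstar := by
    calc Pstar * A⁻¹ = (Pstar * A) * A⁻¹ := by rw [hPsA]
      _ = Pstar := by rw [mul_assoc, hA1, mul_one]
  have hHeq : H = A⁻¹ - Pstar := by
    rw [hH, mul_sub, mul_one, hAiPs]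
  have hPsH : Pstar * H = 0 := by rw [hHeq, mul_sub, hPsAi, hII, sub_self]
  have hIPH : (1 - P) * H = 1 - Pstar := by
    have h1P : (1 : Matrix (Fin n) (Fin n) ℝ) - P = A - Pstar := by rw [hA]; abel
    rw [h1P, hHeq, sub_mul, mul_sub, mul_sub, hA1, hAPs, hPsAi, hII]
    abel
  have hσnn : 0 ≤ specRad H := ENNReal.toReal_nonneg
  have hγpos : 0 < γ := lt_of_le_of_lt (div_nonneg hσnn (by linarith)) hγlo
  set β := (γ - 1) / γ with hβdef
  have hβabs : |β| = (1 - γ) / γ := by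
    rw [hβdef, abs_div, abs_of_pos hγpos, abs_of_neg (by linarith : γ - 1 < 0)]
    ring_nf
  have hβpos : 0 < |β| := by
    rw [hβabs]; apply div_pos <;> linarith
  have hβσ : |β| * specRad H < 1 := by
    rw [hβabs, div_mul_eq_mul_div, div_lt_one hγpos]
    have := (div_lt_iff₀ (by linarith : (0:ℝ) < specRad H + 1)).mp hγlo
    nlinarith
  have hsum := summable_geom H β hβpos hβσ
  set S := ∑' m : ℕ, β ^ m • H ^ (m + 1) with hSdef
  have hhs : HasSum (fun m : ℕ => β ^ m • H ^ (m + 1)) S := hsum.hasSum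
  have hPsS : Pstar * S = 0 := by
    have h0 : HasSum (fun m : ℕ => Pstar * (β ^ m • H ^ (m + 1))) (Pstar * S) :=
      hhs.mul_left Pstar
    have hz : (fun m : ℕ => Pstar * (β ^ m • H ^ (m + 1)))
        = fun _ => (0 : Matrix (Fin n) (Fin n) ℝ) := by
      funext m
      rw [mul_smul_comm, pow_succ', ← mul_assoc, hPsH, zero_mul, smul_zero]
    rw [hz] at h0
    exact h0.unique hasSum_zero
  have hshift : S = H + β • (H * S) := by
    have h1 : HasSum (fun m : ℕ => β • (H * (β ^ m • H ^ (m + 1)))) (β • (H * S)) :=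
      (hhs.mul_left H).const_smul β
    have h2 : (fun m : ℕ => β • (H * (β ^ m • H ^ (m + 1))))
        = fun m : ℕ => β ^ (m + 1) • H ^ (m + 1 + 1) := by
      funext m
      rw [mul_smul_comm, smul_smul, ← pow_succ', ← pow_succ']
    rw [h2] at h1
    have h3 := Summable.tsum_eq_zero_add hsum
    calc S = β ^ 0 • H ^ (0 + 1) + ∑' m : ℕ, β ^ (m + 1) • H ^ (m + 1 + 1) := h3
      _ = β ^ 0 • H ^ (0 + 1) + β • (H * S) := by rw [h1.tsum_eq]
      _ = H + β • (H * S) := by norm_num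
  have hIPS : (1 - P) * S = (1 - Pstar) + β • S := by
    calc (1 - P) * S = (1 - P) * (H + β • (H * S)) := by rw [← hshift]
      _ = (1 - P) * H + β • (((1 - P) * H) * S) := by
          rw [mul_add, mul_smul_comm, mul_assoc]
      _ = (1 - Pstar) + β • ((1 - Pstar) * S) := by rw [hIPH]
      _ = (1 - Pstar) + β • S := by rw [sub_mul, one_mul, hPsS, sub_zero]
  have hγ1 : (1:ℝ) - γ ≠ 0 := ne_of_gt (by linarith)
  have hγβ : γ * β = γ - 1 := by
    rw [hβdef]; field_simp
  have hGS : (1 - γ • P) * S = γ • ((1:Matrix (Fin n) (Fin n) ℝ) - Pstar) := by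
    have expand : (1 - γ • P) * S = S - γ • (P * S) := by
      rw [sub_mul, one_mul, smul_mul_assoc]
    have hPS' : S - P * S = (1 - Pstar) + β • S := by
      rw [← hIPS, sub_mul, one_mul]
    have hPS : P * S = S - ((1 - Pstar) + β • S) := by
      rw [← hPS']; abel
    rw [expand, hPS, smul_sub, smul_add, smul_smul, hγβ]
    module
  have hGPs : (1 - γ • P) * Pstar = (1 - γ) • Pstar := by
    rw [sub_mul, one_mul, smul_mul_assoc, hPP, sub_smul, one_smul]
  have hGM : (1 - γ • P) * ((1 - γ)⁻¹ • Pstar + γ⁻¹ • S) = 1 := by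
    rw [mul_add, mul_smul_comm, mul_smul_comm, hGS, hGPs, smul_smul, smul_smul,
      inv_mul_cancel₀ hγ1, inv_mul_cancel₀ hγpos.ne', one_smul, one_smul, add_sub_cancel]
  have hinv : (1 - γ • P)⁻¹ = (1 - γ)⁻¹ • Pstar + γ⁻¹ • S := Matrix.inv_eq_right_inv hGM
  refine ⟨S *ᵥ r, ?_, ?_⟩
  · have h1 : Tendsto (fun M : ℕ => ∑ m ∈ Finset.range M, β ^ m • H ^ (m + 1)) atTop (𝓝 S) :=
      hhs.tendsto_sum_nat
    have h2 := tendsto_mulVec h1 r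
    have h3 : (fun M : ℕ => (∑ m ∈ Finset.range M, β ^ m • H ^ (m + 1)) *ᵥ r)
        = fun M : ℕ => ∑ m ∈ Finset.range M, β ^ m • (H ^ (m + 1)) *ᵥ r := by
      funext M
      have h4 := map_sum (mulVecL r) (fun m => β ^ m • H ^ (m + 1)) (Finset.range M)
      simp only [mulVecL_apply] at h4
      rw [h4]
      exact Finset.sum_congr rfl fun m _ => Matrix.smul_mulVec _ _ _
    rw [h3] at h2
    exact h2
  · rw [hinv, Matrix.add_mulVec, Matrix.smul_mulVec, Matrix.smul_mulVec]

end Norms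

end LaurentAux

/-- Laurent-series value decomposition, Lamond–Puterman: for
`σ(H)/(σ(H)+1) < γ < 1`, the series `∑_m ((γ-1)/γ)^m H^{m+1} r` converges, and the
discounted value function `v = (I - γP)⁻¹ r` decomposes as
`v = (1/(1-γ)) P* r + (1/γ) ∑_m ((γ-1)/γ)^m H^{m+1} r`. -/
theorem laurent_value_decomposition {n : ℕ} (P : Matrix (Fin n) (Fin n) ℝ)
    (hP : RowStochastic P) (r : Fin n → ℝ) (Pstar : Matrix (Fin n) (Fin n) ℝ)
    (hPstar : Tendsto (fun m : ℕ => (m : ℝ)⁻¹ • ∑ k ∈ Finset.range m, P ^ k)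
      atTop (𝓝 Pstar))
    (H : Matrix (Fin n) (Fin n) ℝ)
    (hH : H = (1 - P + Pstar)⁻¹ * (1 - Pstar))
    (γ : ℝ) (hγlo : specRad H / (specRad H + 1) < γ) (hγhi : γ < 1) :
    ∃ s : Fin n → ℝ,
      Tendsto (fun M : ℕ => ∑ m ∈ Finset.range M, ((γ - 1) / γ) ^ m • (H ^ (m + 1)).mulVec r)
        atTop (𝓝 s) ∧
      (1 - γ • P)⁻¹.mulVec r = (1 - γ)⁻¹ • Pstar.mulVec r + γ⁻¹ • s := by
  rcases Nat.eq_zero_or_pos n with hn | hn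
  · subst hn
    refine ⟨0, ?_, ?_⟩
    · have : (fun M : ℕ => ∑ m ∈ Finset.range M, ((γ - 1) / γ) ^ m • (H ^ (m + 1)).mulVec r)
          = fun _ => (0 : Fin 0 → ℝ) := by
        funext M
        exact Subsingleton.elim _ _
      rw [this]
      exact tendsto_const_nhds
    · exact Subsingleton.elim _ _
  · haveI : Nonempty (Fin n) := Fin.pos_iff_nonempty.mp hn
    exact LaurentAux.core hP hPstar r H hH γ hγlo hγhi
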